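/- Let X and Y be n×n Hermitian complex matrices such that X ≤ (U Y Uᴴ + V Y Vᴴ)/2 in the Loewner order for some n×n unitary matrices U and V. Then for every j ≥ 1 with 2j−1 ≤ n, λ_{2j-1}(X) ≤ λ_j(Y), where λ_j(·) denotes the j-th largest eigenvalue counted with multiplicity. -/

import Mathlib

open Matrix
open scoped ComplexOrder

/-- The `j`-th largest eigenvalue of a Hermitian matrix (`0`-indexed, so `eigDesc hA ⟨0, _⟩`
is the largest), counted with multiplicity. -/
noncomputable def eigDesc {n : ℕ} {A : Matrix (Fin n) (Fin n) ℂ} (hA : A.IsHermitian)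
    (j : Fin n) : ℝ :=
  hA.eigenvalues (Tuple.sort hA.eigenvalues j.rev)

/-- Applying a real function to a Hermitian matrix via the functional calculus yields a
Hermitian matrix. -/
lemma isHermitian_cfc {n : ℕ} {A : Matrix (Fin n) (Fin n) ℂ} (hA : A.IsHermitian)
    (f : ℝ → ℝ) : (hA.cfc f).IsHermitian := by
  rw [← hA.cfc_eq]
  exact cfc_predicate f A

lemma isHermitian_half_smul {n : ℕ} {X : Matrix (Fin n) (Fin n) ℂ} (hX : X.IsHermitian) :
    ((2 : ℝ)⁻¹ • X).IsHermitian := by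
  show _ = _
  rw [Matrix.conjTranspose_smul, star_trivial, hX.eq]

lemma isHermitian_sum_conj {m n : ℕ} {A : Fin m → Matrix (Fin n) (Fin n) ℂ}
    (Z : Fin m → Matrix (Fin n) (Fin n) ℂ) (hA : ∀ i, (A i).IsHermitian) :
    (∑ i, (Z i)ᴴ * A i * Z i).IsHermitian := by
  show _ = _
  rw [Matrix.conjTranspose_sum]
  exact Finset.sum_congr rfl fun i _ => (isHermitian_conjTranspose_mul_mul (Z i) (hA i)).eq

open scoped InnerProductSpace

section AuxEig

variable {n : ℕ} {A : Matrix (Fin n) (Fin n) ℂ}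

lemma repr_toEuclideanLin (hA : A.IsHermitian) (x : EuclideanSpace ℂ (Fin n)) (i : Fin n) :
    hA.eigenvectorBasis.repr (Matrix.toEuclideanLin A x) i
      = hA.eigenvalues i * hA.eigenvectorBasis.repr x i := by
  rw [OrthonormalBasis.repr_apply_apply, OrthonormalBasis.repr_apply_apply]
  rw [EuclideanSpace.inner_eq_star_dotProduct, EuclideanSpace.inner_eq_star_dotProduct]
  rw [Matrix.toEuclideanLin_apply]
  simp only [dotProduct_comm _ (star _)]
  show dotProduct (star (⇑(hA.eigenvectorBasis i))) (A *ᵥ WithLp.ofLp x)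
    = _ * dotProduct (star (⇑(hA.eigenvectorBasis i))) (WithLp.ofLp x)
  rw [Matrix.dotProduct_mulVec]
  have h1 : star (⇑(hA.eigenvectorBasis i)) ᵥ* A = star (A *ᵥ ⇑(hA.eigenvectorBasis i)) := by
    rw [Matrix.star_mulVec, hA.eq]
  rw [h1, hA.mulVec_eigenvectorBasis]
  rw [star_smul, star_trivial, smul_dotProduct]
  simp [Complex.real_smul]

lemma inner_self_re (x : EuclideanSpace ℂ (Fin n)) (b : OrthonormalBasis (Fin n) ℂ (EuclideanSpace ℂ (Fin n))) :
    (⟪x, x⟫_ℂ).re = ∑ i, Complex.normSq (b.repr x i) := by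
  rw [← LinearIsometryEquiv.inner_map_map b.repr x x]
  rw [EuclideanSpace.inner_eq_star_dotProduct]
  simp [dotProduct, Complex.normSq_eq_conj_mul_self, WithLp.equiv]
  rfl

lemma quad_re (hA : A.IsHermitian) (x : EuclideanSpace ℂ (Fin n)) :
    (⟪x, Matrix.toEuclideanLin A x⟫_ℂ).re
      = ∑ i, hA.eigenvalues i * Complex.normSq (hA.eigenvectorBasis.repr x i) := by
  set b := hA.eigenvectorBasis
  rw [← LinearIsometryEquiv.inner_map_map b.repr x (Matrix.toEuclideanLin A x)]
  rw [EuclideanSpace.inner_eq_star_dotProduct]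
  have : ∀ i, b.repr (Matrix.toEuclideanLin A x) i = hA.eigenvalues i * b.repr x i :=
    repr_toEuclideanLin hA x
  simp only [dotProduct]
  rw [Complex.re_sum]
  refine Finset.sum_congr rfl fun i _ => ?_
  show ((b.repr (Matrix.toEuclideanLin A x) i) * star (b.repr x i)).re = _
  rw [mul_comm, this i]
  have : star (b.repr x i) * ((hA.eigenvalues i : ℂ) * b.repr x i)
      = (hA.eigenvalues i : ℂ) * (Complex.normSq (b.repr x i) : ℂ) := by
    rw [Complex.normSq_eq_conj_mul_self, Complex.star_def]; ring
  rw [this]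
  simp

/-- The subspace of vectors supported (in the eigenbasis) on `s`. -/
noncomputable def eigSubspace (hA : A.IsHermitian) (s : Finset (Fin n)) :
    Submodule ℂ (EuclideanSpace ℂ (Fin n)) :=
  LinearMap.ker (LinearMap.pi (fun i : {i : Fin n // i ∉ s} =>
    EuclideanSpace.projₗ i.1 ∘ₗ hA.eigenvectorBasis.repr.toLinearEquiv.toLinearMap))

lemma mem_eigSubspace (hA : A.IsHermitian) (s : Finset (Fin n))
    (x : EuclideanSpace ℂ (Fin n)) :
    x ∈ eigSubspace hA s ↔ ∀ i ∉ s, hA.eigenvectorBasis.repr x i = 0 := by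
  rw [eigSubspace, LinearMap.mem_ker]
  constructor
  · intro h i hi
    exact congrFun h ⟨i, hi⟩
  · intro h
    funext i
    exact h i.1 i.2

lemma card_le_finrank_eigSubspace (hA : A.IsHermitian) (s : Finset (Fin n)) :
    s.card ≤ Module.finrank ℂ (eigSubspace hA s) := by
  classical
  set f := LinearMap.pi (fun i : {i : Fin n // i ∉ s} =>
    EuclideanSpace.projₗ i.1 ∘ₗ hA.eigenvectorBasis.repr.toLinearEquiv.toLinearMap)
  have h1 := LinearMap.finrank_range_add_finrank_ker f
  have h2 : Module.finrank ℂ (LinearMap.range f)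
      ≤ Module.finrank ℂ ({i : Fin n // i ∉ s} → ℂ) := Submodule.finrank_le _
  have h3 : Module.finrank ℂ ({i : Fin n // i ∉ s} → ℂ) = Fintype.card {i : Fin n // i ∉ s} := by
    simp [Module.finrank_pi]
  have h4 : Fintype.card {i : Fin n // i ∉ s} = n - s.card := by
    rw [Fintype.card_subtype]
    have : Finset.filter (fun i => i ∉ s) Finset.univ = sᶜ := by
      ext i; simp
    rw [this, Finset.card_compl]
    simp
  have h5 : Module.finrank ℂ (EuclideanSpace ℂ (Fin n)) = n := finrank_euclideanSpace_fin
  have hsn : s.card ≤ n := by simpa using Finset.card_le_card (Finset.subset_univ s)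
  rw [h5] at h1
  show s.card ≤ Module.finrank ℂ (LinearMap.ker f)
  omega

lemma quad_le_of_mem (hA : A.IsHermitian) (s : Finset (Fin n)) (t : ℝ)
    (ht : ∀ i ∈ s, hA.eigenvalues i ≤ t) (x : EuclideanSpace ℂ (Fin n))
    (hx : x ∈ eigSubspace hA s) :
    (⟪x, Matrix.toEuclideanLin A x⟫_ℂ).re ≤ t * (⟪x, x⟫_ℂ).re := by
  rw [quad_re hA x, inner_self_re x hA.eigenvectorBasis, Finset.mul_sum]
  refine Finset.sum_le_sum fun i _ => ?_
  by_cases hi : i ∈ s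
  · exact mul_le_mul_of_nonneg_right (ht i hi) (Complex.normSq_nonneg _)
  · rw [(mem_eigSubspace hA s x).1 hx i hi]
    simp

lemma quad_ge_of_mem (hA : A.IsHermitian) (s : Finset (Fin n)) (t : ℝ)
    (ht : ∀ i ∈ s, t ≤ hA.eigenvalues i) (x : EuclideanSpace ℂ (Fin n))
    (hx : x ∈ eigSubspace hA s) :
    t * (⟪x, x⟫_ℂ).re ≤ (⟪x, Matrix.toEuclideanLin A x⟫_ℂ).re := by
  rw [quad_re hA x, inner_self_re x hA.eigenvectorBasis, Finset.mul_sum]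
  refine Finset.sum_le_sum fun i _ => ?_
  by_cases hi : i ∈ s
  · exact mul_le_mul_of_nonneg_right (ht i hi) (Complex.normSq_nonneg _)
  · rw [(mem_eigSubspace hA s x).1 hx i hi]
    simp

lemma exists_ne_zero_mem_inf3 (W₁ W₂ W₃ : Submodule ℂ (EuclideanSpace ℂ (Fin n)))
    (h : 2 * n < Module.finrank ℂ W₁ + Module.finrank ℂ W₂ + Module.finrank ℂ W₃) :
    ∃ x, x ≠ 0 ∧ x ∈ W₁ ∧ x ∈ W₂ ∧ x ∈ W₃ := by
  have hE : Module.finrank ℂ (EuclideanSpace ℂ (Fin n)) = n := finrank_euclideanSpace_fin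
  have key : ∀ U V : Submodule ℂ (EuclideanSpace ℂ (Fin n)),
      Module.finrank ℂ U + Module.finrank ℂ V ≤ n + Module.finrank ℂ (U ⊓ V : Submodule ℂ _) := by
    intro U V
    have := Submodule.finrank_sup_add_finrank_inf_eq U V
    have hle : Module.finrank ℂ (U ⊔ V : Submodule ℂ _) ≤ n := by
      have := Submodule.finrank_le (U ⊔ V)
      rwa [hE] at this
    omega
  have h12 := key W₁ W₂
  have h123 := key (W₁ ⊓ W₂) W₃
  have hpos : 0 < Module.finrank ℂ (W₁ ⊓ W₂ ⊓ W₃ : Submodule ℂ _) := by omega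
  obtain ⟨⟨x, hx⟩, hx0⟩ := Module.finrank_pos_iff_exists_ne_zero.mp hpos
  refine ⟨x, ?_, hx.1.1, hx.1.2, hx.2⟩
  intro hx'
  exact hx0 (by simp [hx'] : (⟨x, hx⟩ : (W₁ ⊓ W₂ ⊓ W₃ : Submodule ℂ _)) = 0)

lemma unitary_conj_inner_quad {U Y : Matrix (Fin n) (Fin n) ℂ}
    (hU : U ∈ Matrix.unitaryGroup (Fin n) ℂ) (y : EuclideanSpace ℂ (Fin n)) :
    ⟪Matrix.toEuclideanLin U y, Matrix.toEuclideanLin (U * Y * Uᴴ)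
        (Matrix.toEuclideanLin U y)⟫_ℂ = ⟪y, Matrix.toEuclideanLin Y y⟫_ℂ := by
  have hUU : Uᴴ * U = 1 := (Matrix.mem_unitaryGroup_iff' ).mp hU
  rw [EuclideanSpace.inner_eq_star_dotProduct, EuclideanSpace.inner_eq_star_dotProduct]
  simp only [Matrix.toEuclideanLin_apply, WithLp.ofLp_toLp, dotProduct_comm _ (star _)]
  set v := (WithLp.equiv 2 (Fin n → ℂ)) y
  show dotProduct (star (U *ᵥ v)) ((U * Y * Uᴴ) *ᵥ (U *ᵥ v))
      = dotProduct (star v) (Y *ᵥ v)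
  rw [Matrix.mulVec_mulVec, Matrix.mul_assoc, Matrix.mul_assoc, hUU, Matrix.mul_one,
    Matrix.star_mulVec, ← Matrix.mulVec_mulVec, Matrix.dotProduct_mulVec (star v ᵥ* Uᴴ),
    Matrix.vecMul_vecMul, hUU, Matrix.vecMul_one]

lemma unitary_inner_self {U : Matrix (Fin n) (Fin n) ℂ}
    (hU : U ∈ Matrix.unitaryGroup (Fin n) ℂ) (y : EuclideanSpace ℂ (Fin n)) :
    ⟪Matrix.toEuclideanLin U y, Matrix.toEuclideanLin U y⟫_ℂ = ⟪y, y⟫_ℂ := by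
  have hUU : Uᴴ * U = 1 := (Matrix.mem_unitaryGroup_iff').mp hU
  rw [EuclideanSpace.inner_eq_star_dotProduct, EuclideanSpace.inner_eq_star_dotProduct]
  simp only [Matrix.toEuclideanLin_apply, WithLp.ofLp_toLp, dotProduct_comm _ (star _)]
  set v := (WithLp.equiv 2 (Fin n → ℂ)) y
  show dotProduct (star (U *ᵥ v)) (U *ᵥ v) = dotProduct (star v) v
  rw [Matrix.star_mulVec, Matrix.dotProduct_mulVec, Matrix.vecMul_vecMul, hUU,
    Matrix.vecMul_one]


lemma card_image_Ici (hA : A.IsHermitian) (k : Fin n) :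
    ((Finset.Ici k.rev).image (Tuple.sort hA.eigenvalues)).card = k + 1 := by
  rw [Finset.card_image_of_injective _ (Tuple.sort hA.eigenvalues).injective, Fin.card_Ici]
  have h1 : (k.rev : ℕ) = n - (k + 1) := Fin.val_rev k
  have h2 : (k : ℕ) < n := k.2
  omega

lemma card_image_Iic (hA : A.IsHermitian) (k : Fin n) :
    ((Finset.Iic k.rev).image (Tuple.sort hA.eigenvalues)).card = n - k := by
  rw [Finset.card_image_of_injective _ (Tuple.sort hA.eigenvalues).injective, Fin.card_Iic]
  have h1 : (k.rev : ℕ) = n - (k + 1) := Fin.val_rev k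
  have h2 : (k : ℕ) < n := k.2
  omega

lemma eigDesc_le_of_mem_Ici (hA : A.IsHermitian) (k : Fin n) (i : Fin n)
    (hi : i ∈ (Finset.Ici k.rev).image (Tuple.sort hA.eigenvalues)) :
    eigDesc hA k ≤ hA.eigenvalues i := by
  obtain ⟨i', hi', rfl⟩ := Finset.mem_image.mp hi
  exact Tuple.monotone_sort hA.eigenvalues (Finset.mem_Ici.mp hi')

lemma le_eigDesc_of_mem_Iic (hA : A.IsHermitian) (k : Fin n) (i : Fin n)
    (hi : i ∈ (Finset.Iic k.rev).image (Tuple.sort hA.eigenvalues)) :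
    hA.eigenvalues i ≤ eigDesc hA k := by
  obtain ⟨i', hi', rfl⟩ := Finset.mem_image.mp hi
  exact Tuple.monotone_sort hA.eigenvalues (Finset.mem_Iic.mp hi')

lemma finrank_map_toEuclideanLin {U : Matrix (Fin n) (Fin n) ℂ}
    (hU : U ∈ Matrix.unitaryGroup (Fin n) ℂ) (W : Submodule ℂ (EuclideanSpace ℂ (Fin n))) :
    Module.finrank ℂ (W.map (Matrix.toEuclideanLin U)) = Module.finrank ℂ W := by
  have hUU : Uᴴ * U = 1 := (Matrix.mem_unitaryGroup_iff').mp hU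
  have hcomp : (Matrix.toEuclideanLin Uᴴ).comp (Matrix.toEuclideanLin U)
      = LinearMap.id := by
    apply LinearMap.ext
    intro a
    show Matrix.toEuclideanLin Uᴴ (Matrix.toEuclideanLin U a) = a
    rw [Matrix.toEuclideanLin_apply, Matrix.toEuclideanLin_apply, WithLp.ofLp_toLp,
      Matrix.mulVec_mulVec, hUU, Matrix.one_mulVec, WithLp.toLp_ofLp]
  have hinj : Function.Injective (Matrix.toEuclideanLin U) := by
    intro a b hab
    have h := congrArg (Matrix.toEuclideanLin Uᴴ) hab
    have ha : Matrix.toEuclideanLin Uᴴ (Matrix.toEuclideanLin U a) = a :=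
      congrFun (congrArg (⇑) hcomp) a
    have hb : Matrix.toEuclideanLin Uᴴ (Matrix.toEuclideanLin U b) = b :=
      congrFun (congrArg (⇑) hcomp) b
    rwa [ha, hb] at h
  exact (Submodule.equivMapOfInjective _ hinj W).finrank_eq.symm


end AuxEig

set_option maxHeartbeats 1000000 in
/-- **Proposition 1.2.** If `X ≤ (U Y Uᴴ + V Y Vᴴ)/2` for some unitaries `U, V`, then
`λ_{2j-1}(X) ≤ λ_j(Y)` (eigenvalues in decreasing order, `1`-based indexing). -/
theorem eig_le_of_le_mean_unitary_conj
    {n : ℕ} (X Y : Matrix (Fin n) (Fin n) ℂ) (hX : X.IsHermitian) (hY : Y.IsHermitian)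
    (U V : Matrix (Fin n) (Fin n) ℂ)
    (hU : U ∈ Matrix.unitaryGroup (Fin n) ℂ) (hV : V ∈ Matrix.unitaryGroup (Fin n) ℂ)
    (hle : ((2 : ℝ)⁻¹ • (U * Y * Uᴴ + V * Y * Vᴴ) - X).PosSemidef)
    (j : ℕ) (hj : 1 ≤ j) (hjn : 2 * j - 1 ≤ n) :
    eigDesc hX ⟨2 * j - 1 - 1, by omega⟩ ≤ eigDesc hY ⟨j - 1, by omega⟩ := by
  have hn : 0 < n := by omega
  set kX : Fin n := ⟨2 * j - 1 - 1, by omega⟩ with hkX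
  set kY : Fin n := ⟨j - 1, by omega⟩ with hkY
  have hkXval : (kX : ℕ) = 2 * j - 1 - 1 := rfl
  have hkYval : (kY : ℕ) = j - 1 := rfl
  set sX := (Finset.Ici kX.rev).image (Tuple.sort hX.eigenvalues) with hsX
  set sY := (Finset.Iic kY.rev).image (Tuple.sort hY.eigenvalues) with hsY
  set W₁ := eigSubspace hX sX with hW₁
  set WY := eigSubspace hY sY with hWY
  set W₂ := WY.map (Matrix.toEuclideanLin U) with hW₂
  set W₃ := WY.map (Matrix.toEuclideanLin V) with hW₃
  have cX : sX.card = 2 * j - 1 := by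
    rw [hsX, card_image_Ici]; omega
  have cY : sY.card = n - (j - 1) := by
    rw [hsY, card_image_Iic]
  have d1 : 2 * j - 1 ≤ Module.finrank ℂ W₁ := cX ▸ card_le_finrank_eigSubspace hX sX
  have dY : n - (j - 1) ≤ Module.finrank ℂ WY := cY ▸ card_le_finrank_eigSubspace hY sY
  have d2 : n - (j - 1) ≤ Module.finrank ℂ W₂ := by
    rw [hW₂, finrank_map_toEuclideanLin hU]; exact dY
  have d3 : n - (j - 1) ≤ Module.finrank ℂ W₃ := by
    rw [hW₃, finrank_map_toEuclideanLin hV]; exact dY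
  obtain ⟨x, hx0, hx1, hx2, hx3⟩ := exists_ne_zero_mem_inf3 W₁ W₂ W₃ (by omega)
  set t := eigDesc hY kY with htdef
  set l := eigDesc hX kX with hldef
  set r := (⟪x, x⟫_ℂ).re with hrdef
  -- positivity of r
  have hrpos : 0 < r := by
    have hv : (WithLp.equiv 2 (Fin n → ℂ)) x ≠ 0 := by
      intro h
      apply hx0
      have := congrArg (WithLp.equiv 2 (Fin n → ℂ)).symm h
      simpa using this
    have hpos := (Matrix.dotProduct_star_self_pos_iff (v := (WithLp.equiv 2 (Fin n → ℂ)) x)).mpr hv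
    have e : (⟪x, x⟫_ℂ) = dotProduct (star ((WithLp.equiv 2 (Fin n → ℂ)) x))
        ((WithLp.equiv 2 (Fin n → ℂ)) x) := by
        rw [EuclideanSpace.inner_eq_star_dotProduct, dotProduct_comm _ (star _)]; rfl
    rw [hrdef, e]
    simpa using (Complex.lt_def.mp hpos).1
  -- lower bound on X quadratic form
  have hq1 : l * r ≤ (⟪x, Matrix.toEuclideanLin X x⟫_ℂ).re :=
    quad_ge_of_mem hX sX l (fun i hi => eigDesc_le_of_mem_Ici hX kX i hi) x hx1
  -- upper bounds on conjugated quadratic forms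
  have hq2 : (⟪x, Matrix.toEuclideanLin (U * Y * Uᴴ) x⟫_ℂ).re ≤ t * r := by
    obtain ⟨y, hy, rfl⟩ := Submodule.mem_map.mp hx2
    rw [unitary_conj_inner_quad hU y, hrdef, unitary_inner_self hU y]
    exact quad_le_of_mem hY sY t (fun i hi => le_eigDesc_of_mem_Iic hY kY i hi) y hy
  have hq3 : (⟪x, Matrix.toEuclideanLin (V * Y * Vᴴ) x⟫_ℂ).re ≤ t * r := by
    obtain ⟨y, hy, rfl⟩ := Submodule.mem_map.mp hx3
    rw [unitary_conj_inner_quad hV y, hrdef, unitary_inner_self hV y]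
    exact quad_le_of_mem hY sY t (fun i hi => le_eigDesc_of_mem_Iic hY kY i hi) y hy
  -- PSD inequality
  have hpsd : (⟪x, Matrix.toEuclideanLin X x⟫_ℂ).re
      ≤ 2⁻¹ * ((⟪x, Matrix.toEuclideanLin (U * Y * Uᴴ) x⟫_ℂ).re
        + (⟪x, Matrix.toEuclideanLin (V * Y * Vᴴ) x⟫_ℂ).re) := by
    set v := (WithLp.equiv 2 (Fin n → ℂ)) x with hvdef
    have h := hle.dotProduct_mulVec_nonneg v
    have hre : 0 ≤ (dotProduct (star v)
        ((((2 : ℝ)⁻¹ • (U * Y * Uᴴ + V * Y * Vᴴ) - X)) *ᵥ v)).re := by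
      have := (Complex.le_def.mp h).1
      simpa using this
    rw [Matrix.sub_mulVec, dotProduct_sub, Matrix.smul_mulVec,
      Matrix.add_mulVec, dotProduct_smul, dotProduct_add,
      Complex.sub_re] at hre
    have hsm : ((2 : ℝ)⁻¹ • (dotProduct (star v) ((U * Y * Uᴴ) *ᵥ v)
        + dotProduct (star v) ((V * Y * Vᴴ) *ᵥ v))).re
        = 2⁻¹ * ((dotProduct (star v) ((U * Y * Uᴴ) *ᵥ v)).re
          + (dotProduct (star v) ((V * Y * Vᴴ) *ᵥ v)).re) := by
      rw [Complex.real_smul, Complex.re_ofReal_mul, Complex.add_re]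
    rw [hsm] at hre
    have e1 : (⟪x, Matrix.toEuclideanLin X x⟫_ℂ) = dotProduct (star v) (X *ᵥ v) := by
        rw [EuclideanSpace.inner_eq_star_dotProduct, dotProduct_comm _ (star _)]; rfl
    have e2 : (⟪x, Matrix.toEuclideanLin (U * Y * Uᴴ) x⟫_ℂ)
        = dotProduct (star v) ((U * Y * Uᴴ) *ᵥ v) := by
        rw [EuclideanSpace.inner_eq_star_dotProduct, dotProduct_comm _ (star _)]; rfl
    have e3 : (⟪x, Matrix.toEuclideanLin (V * Y * Vᴴ) x⟫_ℂ)
        = dotProduct (star v) ((V * Y * Vᴴ) *ᵥ v) := by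
        rw [EuclideanSpace.inner_eq_star_dotProduct, dotProduct_comm _ (star _)]; rfl
    rw [e1, e2, e3]
    linarith
  have : l * r ≤ t * r := by linarith
  exact le_of_mul_le_mul_right this hrpos
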